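/- One has S(x) ~ (π²/2)·x as x → ∞; that is, lim_{x→∞} S(x)/x = π²/2. -/

import Mathlib

open Real Filter

/-- `r₂(m)`: the number of representations of `m` as a sum of two squares of integers. -/
noncomputable def r2 (m : ℕ) : ℕ :=
  Set.ncard {p : ℤ × ℤ | p.1 ^ 2 + p.2 ^ 2 = (m : ℤ)}

/-- `S(x)`: the number of integer points `(a,b,w)` with `(a²+b²)² + w² < x`. -/
noncomputable def S (x : ℝ) : ℕ :=
  Set.ncard {p : ℤ × ℤ × ℤ |
    (((p.1 : ℝ) ^ 2 + (p.2.1 : ℝ) ^ 2) ^ 2 + (p.2.2 : ℝ) ^ 2) < x}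

open MeasureTheory
open scoped ENNReal

namespace SAsymp

def T (x : ℝ) : Set (ℤ × ℤ × ℤ) :=
  {p | (((p.1 : ℝ) ^ 2 + (p.2.1 : ℝ) ^ 2) ^ 2 + (p.2.2 : ℝ) ^ 2) < x}

def R (y : ℝ) : Set (ℝ × ℝ × ℝ) :=
  {q | (q.1 ^ 2 + q.2.1 ^ 2) ^ 2 + q.2.2 ^ 2 < y}

def cube (p : ℤ × ℤ × ℤ) : Set (ℝ × ℝ × ℝ) :=
  Set.Ico (p.1 : ℝ) (p.1 + 1) ×ˢ (Set.Ico (p.2.1 : ℝ) (p.2.1 + 1) ×ˢ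
    Set.Ico (p.2.2 : ℝ) (p.2.2 + 1))

lemma mem_cube_iff {p : ℤ × ℤ × ℤ} {q : ℝ × ℝ × ℝ} :
    q ∈ cube p ↔ (⌊q.1⌋, ⌊q.2.1⌋, ⌊q.2.2⌋) = p := by
  simp only [cube, Set.mem_prod, Set.mem_Ico, Prod.ext_iff, Int.floor_eq_iff]

lemma volume_cube (p : ℤ × ℤ × ℤ) : volume (cube p) = 1 := by
  simp only [cube, MeasureTheory.Measure.volume_eq_prod, MeasureTheory.Measure.prod_prod,
    Real.volume_Ico]
  norm_num

lemma abs_floor_le (t : ℝ) : |(⌊t⌋ : ℝ)| ≤ |t| + 1 := by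
  rw [abs_le]
  constructor
  · nlinarith [Int.sub_one_lt_floor t, abs_nonneg t, neg_abs_le t]
  · nlinarith [Int.floor_le t, le_abs_self t]

lemma key {u a b w a' b' w' : ℝ} (hu : 1 ≤ u) (ha : |a'| ≤ |a| + 1) (hb : |b'| ≤ |b| + 1)
    (hw : |w'| ≤ |w| + 1) (hF : (a ^ 2 + b ^ 2) ^ 2 + w ^ 2 < u ^ 4) :
    (a' ^ 2 + b' ^ 2) ^ 2 + w' ^ 2 ≤ (a ^ 2 + b ^ 2) ^ 2 + w ^ 2 + 51 * u ^ 3 := by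
  have hm : a ^ 2 + b ^ 2 ≤ u ^ 2 := by nlinarith [sq_nonneg w, sq_nonneg (a^2+b^2), sq_nonneg u, sq_nonneg (a^2+b^2+u^2)]
  have hau : |a| ≤ u := by nlinarith [sq_nonneg b, abs_nonneg a, sq_abs a]
  have hbu : |b| ≤ u := by nlinarith [sq_nonneg a, abs_nonneg b, sq_abs b]
  have hwu : |w| ≤ u ^ 2 := by nlinarith [sq_nonneg (a^2+b^2), abs_nonneg w, sq_abs w, sq_nonneg (|w| - u^2), sq_nonneg u]
  have h1 : a' ^ 2 + b' ^ 2 ≤ (a ^ 2 + b ^ 2) + (4 * u + 2) := by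
    have := sq_abs a'; have := sq_abs b'; have := sq_abs a; have := sq_abs b
    nlinarith [abs_nonneg a', abs_nonneg b', abs_nonneg a, abs_nonneg b]
  have h2 : (a' ^ 2 + b' ^ 2) ^ 2 ≤ ((a ^ 2 + b ^ 2) + (4 * u + 2)) ^ 2 := by
    nlinarith [sq_nonneg a', sq_nonneg b', sq_nonneg a, sq_nonneg b]
  have h3 : w' ^ 2 ≤ w ^ 2 + 2 * u ^ 2 + 1 := by
    have := sq_abs w'; have := sq_abs w
    nlinarith [abs_nonneg w', abs_nonneg w]
  nlinarith [sq_nonneg (a^2+b^2), hm, hu, sq_nonneg u]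

lemma int_abs_le_sq (n : ℤ) : |(n : ℝ)| ≤ (n : ℝ) ^ 2 := by
  rcases eq_or_ne n 0 with h | h
  · simp [h]
  · have h1 : (1 : ℤ) ≤ |n| := Int.one_le_abs h
    have h1' : (1 : ℝ) ≤ |(n : ℝ)| := by
      rw [← Int.cast_abs]; exact_mod_cast h1
    nlinarith [sq_abs (n : ℝ), abs_nonneg (n : ℝ)]

lemma int_abs_le_quartic (n : ℤ) : |(n : ℝ)| ≤ ((n : ℝ) ^ 2) ^ 2 := by
  have h1 := int_abs_le_sq n
  nlinarith [sq_abs (n : ℝ), abs_nonneg (n : ℝ)]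

lemma T_finite (x : ℝ) : (T x).Finite := by
  have hsub : T x ⊆ (Set.Icc (-⌈x⌉) ⌈x⌉) ×ˢ ((Set.Icc (-⌈x⌉) ⌈x⌉) ×ˢ (Set.Icc (-⌈x⌉) ⌈x⌉)) := by
    rintro ⟨a, b, w⟩ h
    simp only [T, Set.mem_setOf_eq] at h
    have hb : ∀ n : ℤ, |(n : ℝ)| ≤ x → n ∈ Set.Icc (-⌈x⌉) ⌈x⌉ := by
      intro n hn
      have h1 : (n : ℝ) ≤ (⌈x⌉ : ℝ) := ((le_abs_self _).trans hn).trans (Int.le_ceil x)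
      have h2 : (-⌈x⌉ : ℤ) • (1:ℝ) ≤ (n : ℝ) := by
        have h3 := neg_abs_le (n : ℝ)
        have h4 : -(⌈x⌉ : ℝ) ≤ -x := by linarith [Int.le_ceil x]
        simp only [zsmul_eq_mul, mul_one, Int.cast_neg]
        linarith
      simp only [zsmul_eq_mul, mul_one] at h2
      exact ⟨by exact_mod_cast h2, by exact_mod_cast h1⟩
    refine ⟨hb a ?_, hb b ?_, hb w ?_⟩
    · refine le_of_lt (lt_of_le_of_lt ?_ h)
      nlinarith [int_abs_le_quartic a, mul_nonneg (sq_nonneg ((b:ℝ))) (sq_nonneg ((a:ℝ))),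
        sq_nonneg ((b:ℝ)^2), sq_nonneg ((w:ℝ))]
    · refine le_of_lt (lt_of_le_of_lt ?_ h)
      nlinarith [int_abs_le_quartic b, mul_nonneg (sq_nonneg ((a:ℝ))) (sq_nonneg ((b:ℝ))),
        sq_nonneg ((a:ℝ)^2), sq_nonneg ((w:ℝ))]
    · refine le_of_lt (lt_of_le_of_lt ?_ h)
      nlinarith [int_abs_le_sq w, sq_nonneg ((a:ℝ)^2+(b:ℝ)^2)]
  exact Set.Finite.subset ((Set.finite_Icc _ _).prod ((Set.finite_Icc _ _).prod (Set.finite_Icc _ _))) hsub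

lemma volume_disc (t : ℝ) :
    volume {ab : ℝ × ℝ | ab.1 ^ 2 + ab.2 ^ 2 < t} = ENNReal.ofReal (π * t) := by
  rcases le_or_gt t 0 with ht | ht
  · have he : {ab : ℝ × ℝ | ab.1 ^ 2 + ab.2 ^ 2 < t} = ∅ := by
      ext ab
      simp only [Set.mem_setOf_eq, Set.mem_empty_iff_false, iff_false, not_lt]
      nlinarith [sq_nonneg ab.1, sq_nonneg ab.2]
    rw [he, measure_empty, eq_comm, ENNReal.ofReal_eq_zero]
    exact mul_nonpos_of_nonneg_of_nonpos pi_pos.le ht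
  · have hmeas : MeasurableSet {ab : ℝ × ℝ | ab.1 ^ 2 + ab.2 ^ 2 < t} := by
      have : Continuous fun ab : ℝ × ℝ => ab.1 ^ 2 + ab.2 ^ 2 := by fun_prop
      exact (isOpen_lt this continuous_const).measurableSet
    rw [← Complex.volume_preserving_equiv_real_prod.measure_preimage hmeas.nullMeasurableSet]
    have hpre : Complex.measurableEquivRealProd ⁻¹' {ab : ℝ × ℝ | ab.1 ^ 2 + ab.2 ^ 2 < t}
        = Metric.ball (0 : ℂ) (Real.sqrt t) := by
      ext z
      simp only [Set.mem_preimage, Complex.measurableEquivRealProd_apply, Set.mem_setOf_eq,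
        Metric.mem_ball, dist_zero_right]
      rw [show z.re ^ 2 + z.im ^ 2 = Complex.normSq z by simp [Complex.normSq_apply]; ring]
      rw [← Complex.sq_norm, ← Real.lt_sqrt (norm_nonneg z)]
    rw [hpre, Complex.volume_ball]
    rw [← ENNReal.ofReal_pow (Real.sqrt_nonneg t), Real.sq_sqrt ht.le]
    rw [← ENNReal.ofReal_coe_nnreal, ← ENNReal.ofReal_mul ht.le]
    rw [NNReal.coe_real_pi, mul_comm]

lemma integral_aux {y : ℝ} (hy : 0 ≤ y) :
    ∫ w : ℝ, Real.sqrt (max (y - w ^ 2) 0) = π * y / 2 := by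
  have hsy := Real.sqrt_nonneg y
  have hind : (fun w : ℝ => Real.sqrt (max (y - w ^ 2) 0))
      = Set.indicator (Set.Icc (-Real.sqrt y) (Real.sqrt y)) (fun w => Real.sqrt (y - w ^ 2)) := by
    ext w
    rcases le_or_gt (w ^ 2) y with h | h
    · have hw : w ∈ Set.Icc (-Real.sqrt y) (Real.sqrt y) := by
        constructor
        · nlinarith [Real.sq_sqrt hy, abs_nonneg w, neg_abs_le w, sq_abs w,
            Real.sqrt_nonneg y, sq_nonneg (|w| - Real.sqrt y)]
        · nlinarith [Real.sq_sqrt hy, le_abs_self w, sq_abs w, sq_nonneg (|w| - Real.sqrt y),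
            abs_nonneg w]
      rw [Set.indicator_of_mem hw, max_eq_left (by linarith)]
    · have hw : w ∉ Set.Icc (-Real.sqrt y) (Real.sqrt y) := by
        intro hw
        have h2 : w ^ 2 ≤ Real.sqrt y ^ 2 := sq_le_sq' hw.1 hw.2
        nlinarith [Real.sq_sqrt hy]
      rw [Set.indicator_of_notMem hw, max_eq_right (by linarith), Real.sqrt_zero]
  rw [hind, MeasureTheory.integral_indicator measurableSet_Icc,
    MeasureTheory.integral_Icc_eq_integral_Ioc,
    ← intervalIntegral.integral_of_le (by linarith)]
  rcases eq_or_lt_of_le hy with rfl | hy'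
  · simp
  · have hs : Real.sqrt y ≠ 0 := by positivity
    have hcomp := intervalIntegral.integral_comp_mul_left
      (f := fun x : ℝ => Real.sqrt (y - x ^ 2)) (a := (-1:ℝ)) (b := 1) hs
    rw [mul_neg_one, mul_one] at hcomp
    have heq : ∀ t : ℝ, Real.sqrt (y - (Real.sqrt y * t) ^ 2)
        = Real.sqrt y * Real.sqrt (1 - t ^ 2) := by
      intro t
      rw [mul_pow, Real.sq_sqrt hy, ← mul_one_sub, Real.sqrt_mul hy]
    simp only [heq] at hcomp
    rw [intervalIntegral.integral_const_mul, integral_sqrt_one_sub_sq] at hcomp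
    have h1 := hcomp.symm
    rw [smul_eq_mul] at h1
    field_simp at h1
    have h2 : Real.sqrt y * π * Real.sqrt y = π * y := by
      rw [mul_comm (Real.sqrt y) π, mul_assoc, Real.mul_self_sqrt hy]
    linarith

lemma R_measurable (y : ℝ) : MeasurableSet (R y) := by
  have : Continuous fun q : ℝ × ℝ × ℝ => (q.1 ^ 2 + q.2.1 ^ 2) ^ 2 + q.2.2 ^ 2 := by fun_prop
  exact (isOpen_lt this continuous_const).measurableSet

lemma volume_R (y : ℝ) : volume (R y) = ENNReal.ofReal (π ^ 2 / 2 * y) := by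
  rcases le_or_gt y 0 with hy | hy
  · have he : R y = ∅ := by
      ext q
      simp only [R, Set.mem_setOf_eq, Set.mem_empty_iff_false, iff_false, not_lt]
      nlinarith [sq_nonneg (q.1 ^ 2 + q.2.1 ^ 2), sq_nonneg q.2.2]
    rw [he, measure_empty, eq_comm, ENNReal.ofReal_eq_zero]
    nlinarith [sq_nonneg π]
  -- measure preserving reordering
  have hψ : MeasurePreserving
      (fun q : ℝ × ℝ × ℝ => (MeasurableEquiv.prodAssoc (Prod.swap q) : ℝ × ℝ × ℝ))
      (volume : Measure (ℝ × ℝ × ℝ)) (volume : Measure (ℝ × ℝ × ℝ)) := by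
    have h1 : MeasurePreserving (Prod.swap : ℝ × (ℝ × ℝ) → (ℝ × ℝ) × ℝ)
        ((volume : Measure ℝ).prod (volume : Measure (ℝ × ℝ)))
        ((volume : Measure (ℝ × ℝ)).prod (volume : Measure ℝ)) :=
      Measure.measurePreserving_swap
    have h2 := (measurePreserving_prodAssoc (volume : Measure ℝ) (volume : Measure ℝ)
        (volume : Measure ℝ))
    have hv2 : (volume : Measure (ℝ × ℝ)) = (volume : Measure ℝ).prod volume :=
      MeasureTheory.Measure.volume_eq_prod _ _
    have hv3 : (volume : Measure (ℝ × ℝ × ℝ)) = (volume : Measure ℝ).prod volume :=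
      MeasureTheory.Measure.volume_eq_prod _ _
    rw [hv3, hv2]
    rw [hv2] at h1
    exact h2.comp h1
  rw [← hψ.measure_preimage (R_measurable y).nullMeasurableSet]
  have hpre : (fun q : ℝ × ℝ × ℝ => (MeasurableEquiv.prodAssoc (Prod.swap q) : ℝ × ℝ × ℝ)) ⁻¹' R y
      = {q : ℝ × ℝ × ℝ | (q.2.1 ^ 2 + q.2.2 ^ 2) ^ 2 + q.1 ^ 2 < y} := by
    ext ⟨w, a, b⟩
    simp [R, MeasurableEquiv.prodAssoc, Prod.swap]
  rw [hpre]
  have hmeas2 : MeasurableSet {q : ℝ × ℝ × ℝ | (q.2.1 ^ 2 + q.2.2 ^ 2) ^ 2 + q.1 ^ 2 < y} := by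
    have : Continuous fun q : ℝ × ℝ × ℝ => (q.2.1 ^ 2 + q.2.2 ^ 2) ^ 2 + q.1 ^ 2 := by fun_prop
    exact (isOpen_lt this continuous_const).measurableSet
  rw [MeasureTheory.Measure.volume_eq_prod _ _, MeasureTheory.Measure.prod_apply hmeas2]
  have hslice : ∀ w : ℝ,
      volume (Prod.mk w ⁻¹' {q : ℝ × ℝ × ℝ | (q.2.1 ^ 2 + q.2.2 ^ 2) ^ 2 + q.1 ^ 2 < y})
      = ENNReal.ofReal (π * Real.sqrt (max (y - w ^ 2) 0)) := by
    intro w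
    have hset : Prod.mk w ⁻¹' {q : ℝ × ℝ × ℝ | (q.2.1 ^ 2 + q.2.2 ^ 2) ^ 2 + q.1 ^ 2 < y}
        = {ab : ℝ × ℝ | ab.1 ^ 2 + ab.2 ^ 2 < Real.sqrt (max (y - w ^ 2) 0)} := by
      ext ab
      simp only [Set.mem_preimage, Set.mem_setOf_eq]
      rcases le_or_gt (y - w ^ 2) 0 with h | h
      · rw [max_eq_right h, Real.sqrt_zero]
        constructor
        · intro hc; nlinarith [sq_nonneg (ab.1 ^ 2 + ab.2 ^ 2)]
        · intro hc; nlinarith [sq_nonneg ab.1, sq_nonneg ab.2]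
      · rw [max_eq_left h.le]
        rw [Real.lt_sqrt (by positivity)]
        constructor <;> intro hh <;> nlinarith []
    rw [hset, volume_disc]
  simp_rw [hslice]
  have hf : Integrable (fun w : ℝ => π * Real.sqrt (max (y - w ^ 2) 0)) := by
    apply Continuous.integrable_of_hasCompactSupport
    · exact continuous_const.mul (Real.continuous_sqrt.comp
        (((continuous_const.sub (continuous_pow 2)).max continuous_const)))
    · apply HasCompactSupport.intro (isCompact_Icc (a := -Real.sqrt y) (b := Real.sqrt y))
      intro w hw
      have hwy : y - w ^ 2 < 0 := by
        simp only [Set.mem_Icc, not_and_or, not_le] at hw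
        rcases hw with hw | hw
        · nlinarith [Real.sq_sqrt hy.le, Real.sqrt_nonneg y]
        · nlinarith [Real.sq_sqrt hy.le, Real.sqrt_nonneg y]
      rw [max_eq_right hwy.le, Real.sqrt_zero, mul_zero]
  rw [← MeasureTheory.ofReal_integral_eq_lintegral_ofReal hf
    (Filter.Eventually.of_forall fun w => by positivity)]
  rw [MeasureTheory.integral_const_mul, integral_aux hy.le]
  congr 1
  ring

lemma cube_measurable (p : ℤ × ℤ × ℤ) : MeasurableSet (cube p) :=
  measurableSet_Ico.prod (measurableSet_Ico.prod measurableSet_Ico)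

lemma volume_biUnion (x : ℝ) :
    volume (⋃ p ∈ (T_finite x).toFinset, cube p) = ((T_finite x).toFinset.card : ℝ≥0∞) := by
  rw [measure_biUnion_finset ?hd fun p _ => cube_measurable p]
  · simp [volume_cube]
  · intro p _ p' _ hne
    simp only [Function.onFun]
    rw [Set.disjoint_left]
    intro q hq hq'
    exact hne ((mem_cube_iff.mp hq).symm.trans (mem_cube_iff.mp hq'))

lemma S_card (x : ℝ) : (S x : ℝ≥0∞) = ((T_finite x).toFinset.card : ℝ≥0∞) := by
  have : S x = (T x).ncard := rfl
  rw [this, Set.ncard_eq_toFinset_card (T x) (T_finite x)]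

lemma u_prop {x : ℝ} (hx : 1 ≤ x) :
    1 ≤ Real.sqrt (Real.sqrt x) ∧ Real.sqrt (Real.sqrt x) ^ 4 = x := by
  constructor
  · rw [show (1:ℝ) = Real.sqrt (Real.sqrt 1) by simp]
    exact Real.sqrt_le_sqrt (Real.sqrt_le_sqrt hx)
  · rw [show (4:ℕ) = 2 * 2 by norm_num, pow_mul, Real.sq_sqrt (Real.sqrt_nonneg x),
      Real.sq_sqrt (by linarith : (0:ℝ) ≤ x)]

lemma abs_coord_le {p : ℤ} {t : ℝ} (h : t ∈ Set.Ico (p : ℝ) ((p : ℝ) + 1)) :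
    |t| ≤ |(p : ℝ)| + 1 := by
  rw [abs_le]
  constructor
  · linarith [h.1, neg_abs_le ((p : ℝ))]
  · linarith [h.2, le_abs_self ((p : ℝ))]

lemma upper {x : ℝ} (hx : 1 ≤ x) :
    (S x : ℝ) ≤ π ^ 2 / 2 * (x + 51 * (Real.sqrt (Real.sqrt x)) ^ 3) := by
  obtain ⟨hu1, hu4⟩ := u_prop hx
  set u := Real.sqrt (Real.sqrt x) with hu
  have hsub : (⋃ p ∈ (T_finite x).toFinset, cube p) ⊆ R (x + 51 * u ^ 3) := by
    intro q hq
    simp only [Set.mem_iUnion, Set.Finite.mem_toFinset] at hq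
    obtain ⟨p, hp, hq⟩ := hq
    have h1 : |q.1| ≤ |(p.1 : ℝ)| + 1 := abs_coord_le hq.1
    have h2 : |q.2.1| ≤ |(p.2.1 : ℝ)| + 1 := abs_coord_le hq.2.1
    have h3 : |q.2.2| ≤ |(p.2.2 : ℝ)| + 1 := abs_coord_le hq.2.2
    have hFp : ((p.1 : ℝ) ^ 2 + (p.2.1 : ℝ) ^ 2) ^ 2 + (p.2.2 : ℝ) ^ 2 < u ^ 4 := by
      rw [hu4]; exact hp
    have hk := key hu1 h1 h2 h3 hFp
    simp only [R, Set.mem_setOf_eq]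
    have : ((p.1 : ℝ) ^ 2 + (p.2.1 : ℝ) ^ 2) ^ 2 + (p.2.2 : ℝ) ^ 2 < x := hp
    linarith
  have hv : (S x : ℝ≥0∞) ≤ ENNReal.ofReal (π ^ 2 / 2 * (x + 51 * u ^ 3)) := by
    rw [S_card, ← volume_biUnion, ← volume_R]
    exact measure_mono hsub
  have hpos : (0:ℝ) ≤ π ^ 2 / 2 * (x + 51 * u ^ 3) := by positivity
  rw [show ((S x : ℝ≥0∞)) = ENNReal.ofReal ((S x : ℝ)) by simp] at hv
  exact (ENNReal.ofReal_le_ofReal_iff hpos).mp hv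

lemma lower {x : ℝ} (hx : 1 ≤ x) :
    π ^ 2 / 2 * (x - 51 * (Real.sqrt (Real.sqrt x)) ^ 3) ≤ (S x : ℝ) := by
  obtain ⟨hu1, hu4⟩ := u_prop hx
  set u := Real.sqrt (Real.sqrt x) with hu
  rcases le_or_gt (x - 51 * u ^ 3) 0 with hneg | hpos
  · have : (0:ℝ) ≤ (S x : ℝ) := Nat.cast_nonneg _
    nlinarith [sq_nonneg π]
  have hsub : R (x - 51 * u ^ 3) ⊆ ⋃ p ∈ (T_finite x).toFinset, cube p := by
    intro q hq
    simp only [R, Set.mem_setOf_eq] at hq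
    set p : ℤ × ℤ × ℤ := (⌊q.1⌋, ⌊q.2.1⌋, ⌊q.2.2⌋) with hp
    have hqp : q ∈ cube p := mem_cube_iff.mpr rfl
    have hu3 : 0 < 51 * u ^ 3 := by positivity
    have hFq : (q.1 ^ 2 + q.2.1 ^ 2) ^ 2 + q.2.2 ^ 2 < u ^ 4 := by rw [hu4]; linarith
    have hk := key hu1 (abs_floor_le q.1) (abs_floor_le q.2.1) (abs_floor_le q.2.2) hFq
    have hpT : p ∈ T x := by
      simp only [T, Set.mem_setOf_eq, hp]
      linarith
    simp only [Set.mem_iUnion, Set.Finite.mem_toFinset]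
    exact ⟨p, hpT, hqp⟩
  have hv : ENNReal.ofReal (π ^ 2 / 2 * (x - 51 * u ^ 3)) ≤ (S x : ℝ≥0∞) := by
    rw [S_card, ← volume_biUnion, ← volume_R]
    exact measure_mono hsub
  rw [show ((S x : ℝ≥0∞)) = ENNReal.ofReal ((S x : ℝ)) by simp] at hv
  exact (ENNReal.ofReal_le_ofReal_iff (Nat.cast_nonneg _)).mp hv

lemma tendsto_ratio : Tendsto (fun x : ℝ => (Real.sqrt (Real.sqrt x)) ^ 3 / x) atTop (nhds 0) := by
  have hs : Tendsto (fun x : ℝ => Real.sqrt (Real.sqrt x)) atTop atTop := by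
    apply (tendsto_rpow_atTop (by norm_num : (0:ℝ) < 1/4)).congr'
    filter_upwards [eventually_gt_atTop (0:ℝ)] with x hx
    rw [Real.sqrt_eq_rpow, Real.sqrt_eq_rpow, ← Real.rpow_mul hx.le]
    norm_num
  have h := hs.inv_tendsto_atTop
  apply h.congr'
  filter_upwards [eventually_gt_atTop (0:ℝ)] with x hx
  have hx4 : (Real.sqrt (Real.sqrt x)) ^ 4 = x := by
    rw [show (4:ℕ) = 2 * 2 by norm_num, pow_mul, Real.sq_sqrt (Real.sqrt_nonneg x),
      Real.sq_sqrt hx.le]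
  have hpos : 0 < Real.sqrt (Real.sqrt x) := by
    rcases (Real.sqrt_nonneg (Real.sqrt x)).lt_or_eq with h' | h'
    · exact h'
    · exfalso; rw [← h'] at hx4; norm_num at hx4; linarith
  simp only [Pi.inv_apply]
  field_simp
  exact hx4.symm

end SAsymp

open SAsymp in
theorem S_asymptotic :
    Tendsto (fun x : ℝ => (S x : ℝ) / x) atTop (nhds (Real.pi ^ 2 / 2)) := by
  have hlo : Tendsto (fun x : ℝ => π ^ 2 / 2 * ((x - 51 * (Real.sqrt (Real.sqrt x)) ^ 3) / x))
      atTop (nhds (π ^ 2 / 2)) := by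
    have h1 : Tendsto (fun x : ℝ => 1 - 51 * ((Real.sqrt (Real.sqrt x)) ^ 3 / x))
        atTop (nhds (1 - 51 * 0)) :=
      tendsto_const_nhds.sub (tendsto_ratio.const_mul 51)
    rw [mul_zero, sub_zero] at h1
    have h2 := h1.const_mul (π ^ 2 / 2)
    rw [mul_one] at h2
    apply h2.congr'
    filter_upwards [eventually_gt_atTop (0:ℝ)] with x hx
    field_simp
  have hhi : Tendsto (fun x : ℝ => π ^ 2 / 2 * ((x + 51 * (Real.sqrt (Real.sqrt x)) ^ 3) / x))
      atTop (nhds (π ^ 2 / 2)) := by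
    have h1 : Tendsto (fun x : ℝ => 1 + 51 * ((Real.sqrt (Real.sqrt x)) ^ 3 / x))
        atTop (nhds (1 + 51 * 0)) :=
      tendsto_const_nhds.add (tendsto_ratio.const_mul 51)
    rw [mul_zero, add_zero] at h1
    have h2 := h1.const_mul (π ^ 2 / 2)
    rw [mul_one] at h2
    apply h2.congr'
    filter_upwards [eventually_gt_atTop (0:ℝ)] with x hx
    field_simp
  refine tendsto_of_tendsto_of_tendsto_of_le_of_le' hlo hhi ?_ ?_
  · filter_upwards [eventually_ge_atTop (1:ℝ)] with x hx
    rw [mul_div_assoc'] 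
    exact div_le_div_of_nonneg_right (lower hx) (by linarith)
  · filter_upwards [eventually_ge_atTop (1:ℝ)] with x hx
    rw [mul_div_assoc']
    exact div_le_div_of_nonneg_right (upper hx) (by linarith)
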